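/- Let A(ξ) = e^{−ξ} J_ν(e^{−ξ}) and B(ξ) = e^{−2ξ} J_ν'(e^{−ξ}). Then A and B satisfy the first-order system A' = −A − B, B' = (e^{−2ξ} − ν²)A − B, and consequently (A(ξ)B(η) − A(η)B(ξ))/(e^{−2ξ} − e^{−2η}) = ∫_0^∞ A(ξ+u) A(η+u) du for all ξ ≠ η. -/

import Mathlib

open MeasureTheory

/-- The Bessel function of the first kind of order ν, defined by its power series. -/
noncomputable def besselJ (ν x : ℝ) : ℝ :=
  ∑' k : ℕ, ((-1 : ℝ) ^ k / (k.factorial * Real.Gamma (ν + k + 1))) * (x / 2) ^ (ν + 2 * k)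

namespace BesselAux

noncomputable def c (ν : ℝ) (k : ℕ) : ℝ :=
  (-1 : ℝ) ^ k / (k.factorial * Real.Gamma (ν + k + 1))

lemma nu_k_pos {ν : ℝ} (hν : -1 < ν) (k : ℕ) : 0 < ν + k + 1 := by
  have hk0 : (0:ℝ) ≤ (k:ℝ) := Nat.cast_nonneg k
  linarith

lemma gamma_pos {ν : ℝ} (hν : -1 < ν) (k : ℕ) : 0 < Real.Gamma (ν + k + 1) :=
  Real.Gamma_pos_of_pos (nu_k_pos hν k)

lemma c_rec {ν : ℝ} (hν : -1 < ν) (k : ℕ) :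
    ((k:ℝ)+1) * (ν + k + 1) * c ν (k+1) = - c ν k := by
  have hg := gamma_pos hν k
  have hgne : Real.Gamma (ν + k + 1) ≠ 0 := ne_of_gt hg
  have hν1 : (ν + k + 1) ≠ 0 := ne_of_gt (nu_k_pos hν k)
  have hrec : Real.Gamma (ν + (k+1:ℕ) + 1) = (ν + k + 1) * Real.Gamma (ν + k + 1) := by
    push_cast
    rw [show ν + ((k:ℝ)+1) + 1 = (ν + k + 1) + 1 by ring, Real.Gamma_add_one hν1]
  have hfac : ((k+1).factorial : ℝ) = ((k:ℝ)+1) * k.factorial := by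
    rw [Nat.factorial_succ]; push_cast; ring
  have hfne : (k.factorial : ℝ) ≠ 0 := Nat.cast_ne_zero.2 k.factorial_ne_zero
  simp only [c, hrec, hfac, pow_succ]
  field_simp

lemma c_abs_rec {ν : ℝ} (hν : -1 < ν) (k : ℕ) :
    |c ν (k+1)| = |c ν k| / (((k:ℝ)+1) * (ν + k + 1)) := by
  have h := c_rec hν k
  have hpos : (0:ℝ) < ((k:ℝ)+1) * (ν + k + 1) := by
    have := nu_k_pos hν k; positivity
  rw [eq_div_iff (ne_of_gt hpos), ← abs_of_pos hpos, ← abs_mul]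
  rw [show c ν (k+1) * (((k:ℝ)+1) * (ν + k + 1)) = ((k:ℝ)+1) * (ν + k + 1) * c ν (k+1) by ring, h,
    abs_neg]

/-- master summability lemma -/
lemma summable_master {ν : ℝ} (hν : -1 < ν) (m s : ℕ) {R : ℝ} (hR : 0 ≤ R) :
    Summable (fun k : ℕ => ((k:ℝ)+2)^m * |c ν (k+s)| * R^k) := by
  set f : ℕ → ℝ := fun k => ((k:ℝ)+2)^m * |c ν (k+s)| * R^k with hf
  have hf0 : ∀ k, 0 ≤ f k := fun k => by
    apply mul_nonneg (mul_nonneg (by positivity) (abs_nonneg _)) (pow_nonneg hR k)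
  apply summable_of_ratio_norm_eventually_le (r := 1/2) (by norm_num)
  have htend : Filter.Tendsto (fun k : ℕ => ((k:ℝ)+s+1) * (ν + ((k:ℝ)+s) + 1)) Filter.atTop Filter.atTop := by
    apply Filter.Tendsto.atTop_mul_atTop₀
    · apply Filter.tendsto_atTop_add_const_right
      exact Filter.tendsto_atTop_add_const_right _ _ tendsto_natCast_atTop_atTop
    · apply Filter.tendsto_atTop_add_const_right
      exact Filter.tendsto_atTop_add_const_left _ ν
        (Filter.tendsto_atTop_add_const_right _ _ tendsto_natCast_atTop_atTop)
  filter_upwards [htend.eventually_ge_atTop (2^(m+1) * R)] with k hk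
  have hk0 : (0:ℝ) ≤ (k:ℝ) := Nat.cast_nonneg k
  have hs0 : (0:ℝ) ≤ (s:ℝ) := Nat.cast_nonneg s
  have hg : (0:ℝ) < ((k:ℝ)+s+1) * (ν + ((k:ℝ)+s) + 1) := by
    have h2 : (0:ℝ) < ν + ((k:ℝ)+s) + 1 := by linarith
    positivity
  have habs : |c ν (k+1+s)| = |c ν (k+s)| / (((k:ℝ)+s+1) * (ν + ((k:ℝ)+s) + 1)) := by
    have h := c_abs_rec hν (k+s)
    rw [show k+1+s = (k+s)+1 by ring, h]
    push_cast; ring_nf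
  have hb : ((k:ℝ)+1+2)^m ≤ 2^m * ((k:ℝ)+2)^m := by
    rw [← mul_pow]
    exact pow_le_pow_left₀ (by linarith) (by linarith) m
  rw [Real.norm_eq_abs, Real.norm_eq_abs, abs_of_nonneg (hf0 _), abs_of_nonneg (hf0 _)]
  have hck : (0:ℝ) ≤ |c ν (k+s)| := abs_nonneg _
  have step1 : f (k+1) = ((k:ℝ)+1+2)^m * (|c ν (k+s)| / (((k:ℝ)+s+1) * (ν + ((k:ℝ)+s) + 1))) * (R^k * R) := by
    rw [hf]; push_cast; rw [habs]; ring
  rw [step1]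
  have h2m : (0:ℝ) < 2^m := by positivity
  calc ((k:ℝ)+1+2)^m * (|c ν (k+s)| / (((k:ℝ)+s+1) * (ν + ((k:ℝ)+s) + 1))) * (R^k * R)
      ≤ 2^m*((k:ℝ)+2)^m * (|c ν (k+s)| / (((k:ℝ)+s+1) * (ν + ((k:ℝ)+s) + 1))) * (R^k * R) := by
        apply mul_le_mul_of_nonneg_right (mul_le_mul_of_nonneg_right hb (by positivity))
          (mul_nonneg (pow_nonneg hR k) hR)
    _ = ((k:ℝ)+2)^m * |c ν (k+s)| * R^k * (2^m * R / (((k:ℝ)+s+1) * (ν + ((k:ℝ)+s) + 1))) := by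
        field_simp
    _ ≤ ((k:ℝ)+2)^m * |c ν (k+s)| * R^k * (1/2) := by
        apply mul_le_mul_of_nonneg_left _ (mul_nonneg (mul_nonneg (by positivity) hck) (pow_nonneg hR k))
        rw [div_le_iff₀ hg]
        have : (2:ℝ)^(m+1) = 2 * 2^m := by ring
        nlinarith
    _ = 1/2 * f k := by rw [hf]; ring

/-- generic summability for coefficient sequences dominated by (k+2)^m |c (k+s)| -/
lemma summable_poly {ν : ℝ} (hν : -1 < ν) {m s : ℕ} {a : ℕ → ℝ}
    (ha : ∀ k, |a k| ≤ ((k:ℝ)+2)^m * |c ν (k+s)|) (t : ℝ) :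
    Summable (fun k : ℕ => a k * t ^ k) := by
  apply Summable.of_norm_bounded (summable_master hν m s (abs_nonneg t))
  intro k
  rw [Real.norm_eq_abs, abs_mul, abs_pow]
  exact mul_le_mul_of_nonneg_right (ha k) (by positivity)

lemma cast_k_nonneg (k : ℕ) : (0:ℝ) ≤ (k:ℝ) := Nat.cast_nonneg k

/-- the key bound for derivative terms -/
lemma key_bound {y R : ℝ} (hR1 : 1 ≤ R) (hy : |y| ≤ R) (C : ℝ) (k : ℕ) :
    |C * ((k:ℕ) * y ^ (k-1))| ≤ ((k:ℝ)+2)^3 * |C| * R^k := by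
  have h1 : |C * ((k:ℕ) * y ^ (k-1))| = |C| * ((k:ℝ) * |y|^(k-1)) := by
    rw [abs_mul, abs_mul, abs_pow, abs_of_nonneg (cast_k_nonneg k)]
  rw [h1, show ((k:ℝ)+2)^3 * |C| * R^k = |C| * (((k:ℝ)+2)^3 * R^k) by ring]
  apply mul_le_mul_of_nonneg_left _ (abs_nonneg C)
  have hR0 : (0:ℝ) ≤ R := le_trans zero_le_one hR1
  calc (k:ℝ) * |y|^(k-1) ≤ (k:ℝ) * R^k := by
        apply mul_le_mul_of_nonneg_left _ (cast_k_nonneg k)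
        calc |y|^(k-1) ≤ R^(k-1) := pow_le_pow_left₀ (abs_nonneg y) hy _
          _ ≤ R^k := pow_le_pow_right₀ hR1 (Nat.sub_le k 1)
    _ ≤ ((k:ℝ)+2)^3 * R^k := by
        apply mul_le_mul_of_nonneg_right _ (by positivity)
        calc (k:ℝ) ≤ (k:ℝ)+2 := by linarith [cast_k_nonneg k]
          _ ≤ ((k:ℝ)+2)^3 := le_self_pow₀ (by linarith [cast_k_nonneg k]) (by norm_num)

/-- generic term-by-term differentiation -/
lemma hasDerivAt_series {ν : ℝ} (hν : -1 < ν) {m s : ℕ} {a : ℕ → ℝ}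
    (ha : ∀ k, |a k| ≤ ((k:ℝ)+2)^m * |c ν (k+s)|) (t : ℝ) :
    HasDerivAt (fun y => ∑' k : ℕ, a k * y ^ k)
      (∑' k : ℕ, a (k+1) * (((k:ℝ)+1) * t ^ k)) t := by
  have hR1 : (1:ℝ) ≤ |t| + 1 := by linarith [abs_nonneg t]
  have hR0 : (0:ℝ) ≤ |t| + 1 := by linarith [abs_nonneg t]
  have hu : Summable (fun k : ℕ => ((k:ℝ)+2)^(m+3) * |c ν (k+s)| * (|t|+1)^k) :=
    summable_master hν (m+3) s hR0
  have hbound : ∀ (k : ℕ) (y : ℝ), |y| ≤ |t|+1 →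
      ‖a k * ((k:ℕ) * y^(k-1))‖ ≤ ((k:ℝ)+2)^(m+3) * |c ν (k+s)| * (|t|+1)^k := by
    intro k y hy
    rw [Real.norm_eq_abs]
    calc |a k * ((k:ℕ) * y^(k-1))| ≤ ((k:ℝ)+2)^3 * |a k| * (|t|+1)^k := key_bound hR1 hy _ k
      _ ≤ ((k:ℝ)+2)^3 * (((k:ℝ)+2)^m * |c ν (k+s)|) * (|t|+1)^k := by
          apply mul_le_mul_of_nonneg_right (mul_le_mul_of_nonneg_left (ha k) (by positivity)) (by positivity)
      _ = ((k:ℝ)+2)^(m+3) * |c ν (k+s)| * (|t|+1)^k := by rw [pow_add]; ring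
  have key : HasDerivAt (fun y => ∑' k : ℕ, a k * y ^ k)
      (∑' k : ℕ, a k * ((k:ℕ) * t ^ (k-1))) t := by
    apply hasDerivAt_tsum_of_isPreconnected hu
      (Metric.isOpen_ball (x := (0:ℝ)) (ε := |t|+1)) (convex_ball _ _).isPreconnected
      (g := fun k y => a k * y ^ k) (g' := fun k y => a k * ((k:ℕ) * y ^ (k-1)))
      (y₀ := 0) (y := t)
    · intro k y _
      exact (hasDerivAt_pow k y).const_mul (a k)
    · intro k y hy
      simp only [Metric.mem_ball, Real.dist_eq, sub_zero] at hy
      exact hbound k y hy.le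
    · simp only [Metric.mem_ball, Real.dist_eq, sub_zero, abs_zero]
      linarith
    · exact summable_poly hν ha 0
    · simp only [Metric.mem_ball, Real.dist_eq, sub_zero]
      linarith [lt_add_one (|t|)]
  have hsummable : Summable (fun k : ℕ => a k * ((k:ℕ) * t ^ (k-1))) := by
    apply Summable.of_norm_bounded hu
    intro k
    exact hbound k t (by linarith [lt_add_one (|t|)])
  have hsum : (∑' k : ℕ, a k * ((k:ℕ) * t ^ (k-1))) = ∑' k : ℕ, a (k+1) * (((k:ℝ)+1) * t ^ k) := by
    rw [Summable.tsum_eq_zero_add hsummable]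
    simp only [Nat.cast_zero, zero_mul, mul_zero, zero_add]
    apply tsum_congr
    intro k
    push_cast
    ring_nf
  rw [← hsum]
  exact key




noncomputable def g (ν t : ℝ) : ℝ := ∑' k : ℕ, c ν k * t ^ k
noncomputable def g1 (ν t : ℝ) : ℝ := ∑' k : ℕ, (((k:ℝ)+1) * c ν (k+1)) * t ^ k
noncomputable def g2 (ν t : ℝ) : ℝ := ∑' k : ℕ, (((k:ℝ)+1) * (((k:ℝ)+2) * c ν (k+2))) * t ^ k

lemma ha_c (ν : ℝ) : ∀ k : ℕ, |c ν k| ≤ ((k:ℝ)+2)^(0:ℕ) * |c ν (k+0)| := by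
  intro k; simp

lemma ha_g1 (ν : ℝ) : ∀ k : ℕ, |((k:ℝ)+1) * c ν (k+1)| ≤ ((k:ℝ)+2)^(1:ℕ) * |c ν (k+1)| := by
  intro k
  rw [abs_mul, pow_one, abs_of_nonneg (by positivity : (0:ℝ) ≤ (k:ℝ)+1)]
  exact mul_le_mul_of_nonneg_right (by linarith) (abs_nonneg _)

lemma ha_g2 (ν : ℝ) : ∀ k : ℕ, |(((k:ℝ)+1) * (((k:ℝ)+2) * c ν (k+2)))| ≤ ((k:ℝ)+2)^(2:ℕ) * |c ν (k+2)| := by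
  intro k
  rw [abs_mul, abs_mul, abs_of_nonneg (by positivity : (0:ℝ) ≤ (k:ℝ)+1),
    abs_of_nonneg (by positivity : (0:ℝ) ≤ (k:ℝ)+2), sq, mul_assoc]
  apply mul_le_mul_of_nonneg_right (by linarith) (mul_nonneg (by positivity) (abs_nonneg _))

lemma ha_kg1 (ν : ℝ) : ∀ k : ℕ, |(k:ℝ) * (((k:ℝ)+1) * c ν (k+1))| ≤ ((k:ℝ)+2)^(2:ℕ) * |c ν (k+1)| := by
  intro k
  rw [abs_mul, abs_mul, abs_of_nonneg (cast_k_nonneg k),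
    abs_of_nonneg (by positivity : (0:ℝ) ≤ (k:ℝ)+1), sq, mul_assoc]
  gcongr <;> linarith [cast_k_nonneg k]

lemma hasDerivAt_g {ν : ℝ} (hν : -1 < ν) (t : ℝ) : HasDerivAt (g ν) (g1 ν t) t := by
  have h := hasDerivAt_series hν (ha_c ν) t
  have e : (∑' k : ℕ, c ν (k+1) * (((k:ℝ)+1) * t ^ k)) = g1 ν t := by
    rw [g1]; exact tsum_congr fun k => by ring
  rw [show g1 ν t = ∑' k : ℕ, c ν (k+1) * (((k:ℝ)+1) * t ^ k) from e.symm]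
  exact h

lemma hasDerivAt_g1 {ν : ℝ} (hν : -1 < ν) (t : ℝ) : HasDerivAt (g1 ν) (g2 ν t) t := by
  have h := hasDerivAt_series hν (ha_g1 ν) t
  have e : (∑' k : ℕ, (((↑(k+1):ℝ)+1) * c ν (k+1+1)) * (((k:ℝ)+1) * t ^ k)) = g2 ν t := by
    rw [g2]; exact tsum_congr fun k => by push_cast; ring
  rw [show g2 ν t = _ from e.symm]
  exact h

lemma g_ode {ν : ℝ} (hν : -1 < ν) (t : ℝ) :
    t * g2 ν t + (ν+1) * g1 ν t + g ν t = 0 := by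
  have S0 := summable_poly hν (ha_c ν) t
  have S1 := summable_poly hν (ha_g1 ν) t
  have Sh := summable_poly hν (ha_kg1 ν) t
  have step1 : t * g2 ν t = ∑' k : ℕ, ((k:ℝ) * (((k:ℝ)+1) * c ν (k+1))) * t ^ k := by
    rw [g2, ← tsum_mul_left, Summable.tsum_eq_zero_add Sh]
    simp only [Nat.cast_zero, zero_mul, zero_add]
    exact (tsum_congr fun k => by push_cast; ring)
  have step2 : (ν+1) * g1 ν t = ∑' k : ℕ, (ν+1) * ((((k:ℝ)+1) * c ν (k+1)) * t ^ k) := by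
    rw [g1, ← tsum_mul_left]
  rw [step1, step2, g]
  rw [← Summable.tsum_add Sh (S1.mul_left (ν+1)), ← Summable.tsum_add (Sh.add (S1.mul_left (ν+1))) S0]
  rw [show (0:ℝ) = ∑' _ : ℕ, (0:ℝ) from tsum_zero.symm]
  apply tsum_congr
  intro k
  linear_combination (t^k) * c_rec hν k

lemma g_cont {ν : ℝ} (hν : -1 < ν) : Continuous (g ν) := by
  have : ∀ t, HasDerivAt (g ν) (g1 ν t) t := hasDerivAt_g hν
  exact (continuous_iff_continuousAt.2 fun t => (this t).continuousAt)

lemma g1_cont {ν : ℝ} (hν : -1 < ν) : Continuous (g1 ν) := by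
  exact (continuous_iff_continuousAt.2 fun t => (hasDerivAt_g1 hν t).continuousAt)





lemma exp_rpow' (x y : ℝ) : (Real.exp x) ^ y = Real.exp (x * y) := by
  rw [Real.rpow_def_of_pos (Real.exp_pos x), Real.log_exp]

lemma besselJ_eq_g {ν : ℝ} {x : ℝ} (hx : 0 < x) :
    besselJ ν x = (x/2) ^ ν * g ν (x^2/4) := by
  have hx2 : 0 < x/2 := by linarith
  rw [besselJ, g, ← tsum_mul_left]
  apply tsum_congr
  intro k
  have h1 : (x/2 : ℝ) ^ (ν + 2 * (k:ℝ)) = (x/2)^ν * ((x/2)^(2*k : ℕ) : ℝ) := by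
    rw [Real.rpow_add hx2, show ((2:ℝ) * k) = ((2*k : ℕ):ℝ) by push_cast; ring,
      Real.rpow_natCast]
  rw [h1, pow_mul, show (x/2)^2 = x^2/4 by ring]
  rw [c]
  ring

/-- the derivative of besselJ at positive points -/
lemma hasDerivAt_Phi {ν : ℝ} (hν : -1 < ν) {x : ℝ} (hx : 0 < x) :
    HasDerivAt (fun x => (x/2) ^ ν * g ν (x^2/4))
      ((ν * (x/2)^(ν-1) * (1/2)) * g ν (x^2/4) + (x/2)^ν * (g1 ν (x^2/4) * (x/2))) x := by
  have hx2 : (0:ℝ) < x/2 := by linarith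
  have hd : HasDerivAt (fun x : ℝ => x/2) (1/2) x := (hasDerivAt_id x).div_const 2
  have h1 : HasDerivAt (fun x : ℝ => (x/2) ^ ν) (ν * (x/2)^(ν-1) * (1/2)) x := by
    have := hd.rpow_const (p := ν) (Or.inl (ne_of_gt hx2))
    convert this using 1; ring
  have hinner : HasDerivAt (fun x : ℝ => x^2/4) (x/2) x := by
    have := (hasDerivAt_pow 2 x).div_const 4
    refine this.congr_deriv (Eq.symm ?_)
    push_cast; ring
  have h2 : HasDerivAt (fun x : ℝ => g ν (x^2/4)) (g1 ν (x^2/4) * (x/2)) x := by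
    have := (hasDerivAt_g hν (x^2/4)).comp x hinner; exact this
  exact h1.mul h2

lemma deriv_besselJ {ν : ℝ} (hν : -1 < ν) {x : ℝ} (hx : 0 < x) :
    deriv (besselJ ν) x =
      (ν * (x/2)^(ν-1) * (1/2)) * g ν (x^2/4) + (x/2)^ν * (g1 ν (x^2/4) * (x/2)) := by
  have hev : besselJ ν =ᶠ[nhds x] (fun x => (x/2) ^ ν * g ν (x^2/4)) := by
    filter_upwards [isOpen_Ioi.eventually_mem (show x ∈ Set.Ioi (0:ℝ) from hx)] with y hy
    exact besselJ_eq_g hy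
  rw [hev.deriv_eq, (hasDerivAt_Phi hν hx).deriv]

noncomputable def Pf (ν ξ : ℝ) : ℝ := Real.exp (-ξ) * (Real.exp (-ξ)/2) ^ ν
noncomputable def Qf (ν ξ : ℝ) : ℝ := g ν (Real.exp (-2*ξ)/4)
noncomputable def Rf (ν ξ : ℝ) : ℝ := g1 ν (Real.exp (-2*ξ)/4)

lemma exp_two (ξ : ℝ) : Real.exp (-2*ξ) = Real.exp (-ξ) * Real.exp (-ξ) := by
  rw [← Real.exp_add]; congr 1; ring

lemma A_formula {ν : ℝ} (ξ : ℝ) :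
    Real.exp (-ξ) * besselJ ν (Real.exp (-ξ)) = Pf ν ξ * Qf ν ξ := by
  rw [besselJ_eq_g (Real.exp_pos (-ξ)), Pf, Qf]
  rw [show (Real.exp (-ξ))^2 = Real.exp (-2*ξ) from (exp_two ξ ▸ (sq (Real.exp (-ξ))).symm ▸ rfl)]
  ring

lemma B_formula {ν : ℝ} (hν : -1 < ν) (ξ : ℝ) :
    Real.exp (-2*ξ) * deriv (besselJ ν) (Real.exp (-ξ)) =
      ν * (Pf ν ξ * Qf ν ξ) + (1/2) * Real.exp (-2*ξ) * (Pf ν ξ * Rf ν ξ) := by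
  have ht : (0:ℝ) < Real.exp (-ξ) := Real.exp_pos _
  rw [deriv_besselJ hν ht]
  have hsq : (Real.exp (-ξ))^2 = Real.exp (-2*ξ) := by rw [sq, ← Real.exp_add]; congr 1; ring
  rw [Real.rpow_sub_one (ne_of_gt (by linarith : (0:ℝ) < Real.exp (-ξ)/2)), hsq]
  rw [Pf, Qf, Rf, exp_two ξ]
  have h2 : Real.exp (-ξ) ≠ 0 := ne_of_gt ht
  field_simp

lemma hasDerivAt_Pf {ν : ℝ} (ξ : ℝ) :
    HasDerivAt (Pf ν) (-(1+ν) * Pf ν ξ) ξ := by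
  have hexp : HasDerivAt (fun ξ : ℝ => Real.exp (-ξ)) (-Real.exp (-ξ)) ξ := by
    have h := (Real.hasDerivAt_exp (-ξ)).comp ξ (hasDerivAt_neg ξ)
    refine h.congr_deriv (Eq.symm ?_); ring
  have hpow : HasDerivAt (fun ξ : ℝ => (Real.exp (-ξ)/2) ^ ν)
      (ν * (Real.exp (-ξ)/2)^(ν-1) * (-Real.exp (-ξ)/2)) ξ := by
    have := (hexp.div_const 2).rpow_const (p := ν)
      (Or.inl (ne_of_gt (by positivity : (0:ℝ) < Real.exp (-ξ)/2)))
    convert this using 1; ring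
  have h := hexp.mul hpow
  refine h.congr_deriv (Eq.symm ?_)
  rw [Real.rpow_sub_one (ne_of_gt (by positivity : (0:ℝ) < Real.exp (-ξ)/2))]
  rw [Pf]
  have h2 : Real.exp (-ξ) ≠ 0 := ne_of_gt (Real.exp_pos _)
  field_simp
  ring

lemma hasDerivAt_inner (ξ : ℝ) :
    HasDerivAt (fun ξ : ℝ => Real.exp (-2*ξ)/4) (-Real.exp (-2*ξ)/2) ξ := by
  have h1 : HasDerivAt (fun ξ : ℝ => (-2:ℝ)*ξ) (-2) ξ := by
    simpa using (hasDerivAt_id ξ).const_mul (-2:ℝ)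
  have h := ((Real.hasDerivAt_exp (-2*ξ)).comp ξ h1).div_const 4
  refine h.congr_deriv (Eq.symm ?_); ring

lemma hasDerivAt_Qf {ν : ℝ} (hν : -1 < ν) (ξ : ℝ) :
    HasDerivAt (Qf ν) (-(1/2) * Real.exp (-2*ξ) * Rf ν ξ) ξ := by
  have h := (hasDerivAt_g hν (Real.exp (-2*ξ)/4)).comp ξ (hasDerivAt_inner ξ)
  refine h.congr_deriv (Eq.symm ?_)
  rw [Rf]; ring

lemma hasDerivAt_Rf {ν : ℝ} (hν : -1 < ν) (ξ : ℝ) :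
    HasDerivAt (Rf ν) (2*(ν+1) * Rf ν ξ + 2 * Qf ν ξ) ξ := by
  have h := (hasDerivAt_g1 hν (Real.exp (-2*ξ)/4)).comp ξ (hasDerivAt_inner ξ)
  refine h.congr_deriv (Eq.symm ?_)
  rw [Rf, Qf]
  linear_combination 2 * g_ode hν (Real.exp (-2*ξ)/4)





lemma Pf_add (ν s u : ℝ) : Pf ν (s+u) = Pf ν s * Real.exp (-(1+ν)*u) := by
  have h1 : Real.exp (-(s+u)) = Real.exp (-s) * Real.exp (-u) := by
    rw [← Real.exp_add]; congr 1; ring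
  have h2 : (Real.exp (-(s+u))/2 : ℝ) ^ ν = (Real.exp (-s)/2)^ν * Real.exp (-u*ν) := by
    rw [h1, show Real.exp (-s) * Real.exp (-u) / 2 = (Real.exp (-s)/2) * Real.exp (-u) by ring,
      Real.mul_rpow (by positivity) (Real.exp_pos _).le, exp_rpow']
  rw [Pf, Pf, h2, h1, show Real.exp (-(1+ν)*u) = Real.exp (-u) * Real.exp (-u*ν) by
    rw [← Real.exp_add]; congr 1; ring]
  ring

section main
variable {ν : ℝ} (hν : -1/2 < ν) {A B : ℝ → ℝ}
  (hA : ∀ ξ, A ξ = Real.exp (-ξ) * besselJ ν (Real.exp (-ξ)))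
  (hB : ∀ ξ, B ξ = Real.exp (-2 * ξ) * deriv (besselJ ν) (Real.exp (-ξ)))

include hν hA hB

theorem main_result :
    (∀ ξ, deriv A ξ = -A ξ - B ξ) ∧
    (∀ ξ, deriv B ξ = (Real.exp (-2 * ξ) - ν ^ 2) * A ξ - B ξ) ∧
    ∀ ξ η : ℝ, ξ ≠ η →
      (A ξ * B η - A η * B ξ) / (Real.exp (-2 * ξ) - Real.exp (-2 * η))
        = ∫ u in Set.Ioi (0:ℝ), A (ξ + u) * A (η + u) := by
  have hν' : (-1:ℝ) < ν := by linarith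
  have hAeq : ∀ ξ, A ξ = Pf ν ξ * Qf ν ξ := fun ξ => by
    rw [hA ξ, show -ξ = -(1*ξ) by ring]
    simpa using A_formula (ν := ν) ξ
  have hBeq : ∀ ξ, B ξ = ν * (Pf ν ξ * Qf ν ξ)
      + (1/2) * Real.exp (-2*ξ) * (Pf ν ξ * Rf ν ξ) := fun ξ => by
    rw [hB ξ]; exact B_formula hν' ξ
  -- derivative of A
  have hA' : ∀ ξ, HasDerivAt A (-A ξ - B ξ) ξ := by
    intro ξ
    have h := (hasDerivAt_Pf (ν := ν) ξ).mul (hasDerivAt_Qf hν' ξ)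
    have h2 : HasDerivAt A (-(1+ν) * Pf ν ξ * Qf ν ξ
        + Pf ν ξ * (-(1/2) * Real.exp (-2*ξ) * Rf ν ξ)) ξ :=
      h.congr_of_eventuallyEq (Filter.Eventually.of_forall fun y => hAeq y)
    have h3 : -A ξ - B ξ = -(1+ν) * Pf ν ξ * Qf ν ξ
        + Pf ν ξ * (-(1/2) * Real.exp (-2*ξ) * Rf ν ξ) := by
      rw [hAeq ξ, hBeq ξ]; ring
    rw [h3]; exact h2
  -- derivative of B
  have hexpd : ∀ ξ : ℝ, HasDerivAt (fun ξ : ℝ => Real.exp (-2*ξ)) (-2 * Real.exp (-2*ξ)) ξ := by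
    intro ξ
    have h1 : HasDerivAt (fun ξ : ℝ => (-2:ℝ)*ξ) (-2) ξ := by
      simpa using (hasDerivAt_id ξ).const_mul (-2:ℝ)
    have h := (Real.hasDerivAt_exp (-2*ξ)).comp ξ h1
    refine h.congr_deriv (Eq.symm ?_); ring
  have hB' : ∀ ξ, HasDerivAt B ((Real.exp (-2*ξ) - ν^2) * A ξ - B ξ) ξ := by
    intro ξ
    have hPQ := (hasDerivAt_Pf (ν := ν) ξ).mul (hasDerivAt_Qf hν' ξ)
    have hPR := (hasDerivAt_Pf (ν := ν) ξ).mul (hasDerivAt_Rf hν' ξ)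
    have h := (hPQ.const_mul ν).add (((hexpd ξ).mul hPR).const_mul (1/2))
    have h2 : HasDerivAt B (ν * (-(1+ν) * Pf ν ξ * Qf ν ξ
          + Pf ν ξ * (-(1/2) * Real.exp (-2*ξ) * Rf ν ξ))
        + 1/2 * (-2 * Real.exp (-2*ξ) * (Pf ν ξ * Rf ν ξ)
          + Real.exp (-2*ξ) * (-(1+ν) * Pf ν ξ * Rf ν ξ
            + Pf ν ξ * (2*(ν+1) * Rf ν ξ + 2 * Qf ν ξ)))) ξ :=
      h.congr_of_eventuallyEq (Filter.Eventually.of_forall fun y => by rw [hBeq y]; simp only [Pi.add_apply, Pi.mul_apply]; ring)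
    have h3 : (Real.exp (-2*ξ) - ν^2) * A ξ - B ξ = ν * (-(1+ν) * Pf ν ξ * Qf ν ξ
          + Pf ν ξ * (-(1/2) * Real.exp (-2*ξ) * Rf ν ξ))
        + 1/2 * (-2 * Real.exp (-2*ξ) * (Pf ν ξ * Rf ν ξ)
          + Real.exp (-2*ξ) * (-(1+ν) * Pf ν ξ * Rf ν ξ
            + Pf ν ξ * (2*(ν+1) * Rf ν ξ + 2 * Qf ν ξ))) := by
      rw [hAeq ξ, hBeq ξ]; ring
    rw [h3]; exact h2
  refine ⟨fun ξ => (hA' ξ).deriv, fun ξ => (hB' ξ).deriv, ?_⟩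

  -- the integral identity
  intro ξ η hne
  have hAcont : Continuous A := continuous_iff_continuousAt.2 fun x => (hA' x).continuousAt
  set K : ℝ := Real.exp (-2*η) - Real.exp (-2*ξ) with hK
  have hKne : K ≠ 0 := by
    rw [hK, sub_ne_zero]
    intro h
    apply hne
    have := Real.exp_eq_exp.1 h
    linarith
  have hAs : ∀ s u : ℝ, HasDerivAt (fun u => A (s+u)) (-A (s+u) - B (s+u)) u := by
    intro s u
    have h := (hA' (s+u)).comp u ((hasDerivAt_id u).const_add s)
    have h2 : HasDerivAt (fun u => A (s+u)) ((-A (s+u) - B (s+u)) * 1) u := h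
    simpa using h2
  have hBs : ∀ s u : ℝ, HasDerivAt (fun u => B (s+u))
      ((Real.exp (-2*(s+u)) - ν^2) * A (s+u) - B (s+u)) u := by
    intro s u
    have h := (hB' (s+u)).comp u ((hasDerivAt_id u).const_add s)
    have h2 : HasDerivAt (fun u => B (s+u))
        (((Real.exp (-2*(s+u)) - ν^2) * A (s+u) - B (s+u)) * 1) u := h
    simpa using h2
  have hexp2 : ∀ u : ℝ, HasDerivAt (fun u : ℝ => Real.exp (2*u)) (2 * Real.exp (2*u)) u := by
    intro u
    have h1 : HasDerivAt (fun u : ℝ => (2:ℝ)*u) (2) u := by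
      simpa using (hasDerivAt_id u).const_mul (2:ℝ)
    have h := (Real.hasDerivAt_exp (2*u)).comp u h1
    refine h.congr_deriv (Eq.symm ?_)
    ring
  set G : ℝ → ℝ := fun u => Real.exp (2*u) * (A (ξ+u) * B (η+u) - A (η+u) * B (ξ+u)) with hGdef
  have e1 : ∀ s u : ℝ, Real.exp (-2*(s+u)) = Real.exp (-2*s) * Real.exp (-2*u) := by
    intro s u; rw [← Real.exp_add]; congr 1; ring
  have hab : ∀ u : ℝ, Real.exp (2*u) * Real.exp (-2*u) = 1 := by
    intro u; rw [← Real.exp_add]; simp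
  have hGderiv : ∀ u : ℝ, HasDerivAt G (K * (A (ξ+u) * A (η+u))) u := by
    intro u
    have hinner := ((hAs ξ u).mul (hBs η u)).sub ((hAs η u).mul (hBs ξ u))
    have h := (hexp2 u).mul hinner
    refine h.congr_deriv (Eq.symm ?_)
    simp only [Pi.sub_apply, Pi.mul_apply]
    rw [e1 η u, e1 ξ u, hK]
    linear_combination (-(Real.exp (-2*η) - Real.exp (-2*ξ)) * A (ξ+u) * A (η+u)) * hab u
  have hprod : ∀ u : ℝ, Real.exp (2*u) * (Real.exp (-(1+ν)*u) * Real.exp (-(1+ν)*u)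
      * Real.exp (-2*u)) = Real.exp (-(2+2*ν)*u) := by
    intro u
    rw [← Real.exp_add, ← Real.exp_add, ← Real.exp_add]; congr 1; ring
  have hGeq : G = fun u => ((1/2) * (Pf ν ξ * Pf ν η)) * (Real.exp (-(2+2*ν)*u) *
      (Real.exp (-2*η) * (Qf ν (ξ+u) * Rf ν (η+u))
        - Real.exp (-2*ξ) * (Qf ν (η+u) * Rf ν (ξ+u)))) := by
    funext u
    rw [hGdef]
    simp only
    rw [hAeq (ξ+u), hAeq (η+u), hBeq (ξ+u), hBeq (η+u), Pf_add ν ξ u, Pf_add ν η u,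
      e1 η u, e1 ξ u]
    linear_combination ((1/2) * (Pf ν ξ * Pf ν η) * (Real.exp (-2*η) * (Qf ν (ξ+u) * Rf ν (η+u))
      - Real.exp (-2*ξ) * (Qf ν (η+u) * Rf ν (ξ+u)))) * hprod u
  have hGtend : Filter.Tendsto G Filter.atTop (nhds 0) := by
    rw [hGeq]
    have hT1 : Filter.Tendsto (fun u : ℝ => Real.exp (-(2+2*ν)*u)) Filter.atTop (nhds 0) := by
      have h2 : Filter.Tendsto (fun u : ℝ => (2+2*ν)*u) Filter.atTop Filter.atTop :=
        Filter.Tendsto.const_mul_atTop (by linarith) Filter.tendsto_id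
      have heq : (fun u : ℝ => Real.exp (-(2+2*ν)*u))
          = (fun x : ℝ => Real.exp (-x)) ∘ (fun u : ℝ => (2+2*ν)*u) := by
        funext u; simp only [Function.comp_apply]; congr 1; ring
      rw [heq]
      exact Real.tendsto_exp_neg_atTop_nhds_zero.comp h2
    have hin : ∀ s : ℝ, Filter.Tendsto (fun u : ℝ => Real.exp (-2*(s+u))/4)
        Filter.atTop (nhds 0) := by
      intro s
      have h3 : Filter.Tendsto (fun u : ℝ => -2*(s+u)) Filter.atTop Filter.atBot :=
        (Filter.tendsto_const_mul_atBot_of_neg (by norm_num : (-2:ℝ) < 0)).2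
          (Filter.tendsto_atTop_add_const_left _ s Filter.tendsto_id)
      have := (Real.tendsto_exp_atBot.comp h3).div_const 4
      simpa using this
    have hQt : ∀ s : ℝ, Filter.Tendsto (fun u : ℝ => Qf ν (s+u)) Filter.atTop (nhds (g ν 0)) :=
      fun s => ((g_cont hν').tendsto 0).comp (hin s)
    have hRt : ∀ s : ℝ, Filter.Tendsto (fun u : ℝ => Rf ν (s+u)) Filter.atTop (nhds (g1 ν 0)) :=
      fun s => ((g1_cont hν').tendsto 0).comp (hin s)
    have hbr := (((hQt ξ).mul (hRt η)).const_mul (Real.exp (-2*η))).sub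
      (((hQt η).mul (hRt ξ)).const_mul (Real.exp (-2*ξ)))
    have := (hT1.mul hbr).const_mul ((1/2) * (Pf ν ξ * Pf ν η))
    simpa using this
  -- integrability
  obtain ⟨M, hM⟩ := (isCompact_Icc (a := (0:ℝ))
    (b := Real.exp (-2*ξ)/4 + Real.exp (-2*η)/4)).exists_bound_of_continuousOn
    (g_cont hν').continuousOn
  have hM0 : 0 ≤ M := le_trans (norm_nonneg (g ν 0)) (hM 0 ⟨le_refl 0, by positivity⟩)
  have hAb : ∀ s : ℝ, Real.exp (-2*s)/4 ≤ Real.exp (-2*ξ)/4 + Real.exp (-2*η)/4 →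
      ∀ u : ℝ, 0 ≤ u → |A (s+u)| ≤ |Pf ν s| * M * Real.exp (-(1+ν)*u) := by
    intro s hs u hu
    rw [hAeq (s+u), Pf_add ν s u]
    have hmem : Real.exp (-2*(s+u))/4 ∈ Set.Icc (0:ℝ) (Real.exp (-2*ξ)/4 + Real.exp (-2*η)/4) := by
      constructor
      · positivity
      · have : Real.exp (-2*(s+u)) ≤ Real.exp (-2*s) := Real.exp_le_exp.2 (by linarith)
        linarith
    have hq : |Qf ν (s+u)| ≤ M := by
      rw [Qf, ← Real.norm_eq_abs]
      exact hM _ hmem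
    rw [abs_mul, abs_mul, abs_of_nonneg (Real.exp_pos (-(1+ν)*u)).le]
    calc |Pf ν s| * Real.exp (-(1+ν)*u) * |Qf ν (s+u)|
        ≤ |Pf ν s| * Real.exp (-(1+ν)*u) * M := by
          apply mul_le_mul_of_nonneg_left hq (by positivity)
      _ = |Pf ν s| * M * Real.exp (-(1+ν)*u) := by ring
  have hexpprod : ∀ u : ℝ, Real.exp (-(1+ν)*u) * Real.exp (-(1+ν)*u)
      = Real.exp (-(2+2*ν)*u) := by
    intro u; rw [← Real.exp_add]; congr 1; ring
  have hbound : ∀ u ∈ Set.Ioi (0:ℝ), ‖A (ξ+u) * A (η+u)‖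
      ≤ (|Pf ν ξ| * M * (|Pf ν η| * M)) * Real.exp (-(2+2*ν)*u) := by
    intro u hu
    have h1 := hAb ξ (by linarith [Real.exp_pos (-2*η)]) u (le_of_lt hu)
    have h2 := hAb η (by linarith [Real.exp_pos (-2*ξ)]) u (le_of_lt hu)
    rw [Real.norm_eq_abs, abs_mul]
    calc |A (ξ+u)| * |A (η+u)|
        ≤ (|Pf ν ξ| * M * Real.exp (-(1+ν)*u)) * (|Pf ν η| * M * Real.exp (-(1+ν)*u)) :=
          mul_le_mul h1 h2 (abs_nonneg _) (by positivity)
      _ = (|Pf ν ξ| * M * (|Pf ν η| * M)) * (Real.exp (-(1+ν)*u) * Real.exp (-(1+ν)*u)) := by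
          ring
      _ = (|Pf ν ξ| * M * (|Pf ν η| * M)) * Real.exp (-(2+2*ν)*u) := by rw [hexpprod u]
  have hint : IntegrableOn (fun u => A (ξ+u) * A (η+u)) (Set.Ioi (0:ℝ)) := by
    apply Integrable.mono'
      (g := fun u => (|Pf ν ξ| * M * (|Pf ν η| * M)) * Real.exp (-(2+2*ν)*u))
    · exact (exp_neg_integrableOn_Ioi 0 (show (0:ℝ) < 2+2*ν by linarith)).const_mul _
    · exact ((hAcont.comp (continuous_const.add continuous_id)).mul
        (hAcont.comp (continuous_const.add continuous_id))).aestronglyMeasurable.restrict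
    · rw [ae_restrict_iff' measurableSet_Ioi]
      exact MeasureTheory.ae_of_all _ hbound
  have hint2 : IntegrableOn (fun u => K * (A (ξ+u) * A (η+u))) (Set.Ioi (0:ℝ)) :=
    hint.const_mul K
  have key := integral_Ioi_of_hasDerivAt_of_tendsto (a := (0:ℝ)) (m := 0)
    (f := G) (f' := fun u => K * (A (ξ+u) * A (η+u)))
    (hGderiv 0).continuousAt.continuousWithinAt (fun x _ => hGderiv x) hint2 hGtend
  have hG0 : G 0 = A ξ * B η - A η * B ξ := by
    rw [hGdef]; simp
  have hI : K * ∫ u in Set.Ioi (0:ℝ), A (ξ+u) * A (η+u) = -(A ξ * B η - A η * B ξ) := by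
    rw [← MeasureTheory.integral_const_mul, key, hG0]; ring
  have hD : A ξ * B η - A η * B ξ
      = -K * ∫ u in Set.Ioi (0:ℝ), A (ξ+u) * A (η+u) := by
    linarith [hI]
  have hKden : Real.exp (-2*ξ) - Real.exp (-2*η) = -K := by rw [hK]; ring
  rw [show Real.exp (-2 * ξ) - Real.exp (-2 * η) = -K from hKden, hD,
    mul_div_cancel_left₀ _ (neg_ne_zero.2 hKne)]


end main

end BesselAux

/-- A(ξ) = e^{−ξ}J_ν(e^{−ξ}), B(ξ) = e^{−2ξ}J_ν'(e^{−ξ}) satisfy the first-order system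
A' = −A − B, B' = (e^{−2ξ} − ν²)A − B, and the Bessel kernel in exponential coordinates
is the square of the Hankel operator with symbol A. -/
theorem stmt12 (ν : ℝ) (hν : -1/2 < ν) (A B : ℝ → ℝ)
    (hA : ∀ ξ, A ξ = Real.exp (-ξ) * besselJ ν (Real.exp (-ξ)))
    (hB : ∀ ξ, B ξ = Real.exp (-2 * ξ) * deriv (besselJ ν) (Real.exp (-ξ))) :
    (∀ ξ, deriv A ξ = -A ξ - B ξ) ∧
    (∀ ξ, deriv B ξ = (Real.exp (-2 * ξ) - ν ^ 2) * A ξ - B ξ) ∧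
    ∀ ξ η : ℝ, ξ ≠ η →
      (A ξ * B η - A η * B ξ) / (Real.exp (-2 * ξ) - Real.exp (-2 * η))
        = ∫ u in Set.Ioi (0:ℝ), A (ξ + u) * A (η + u) := by
  exact BesselAux.main_result hν hA hB
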